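/- Fix positive integers k and n and set partitions P_1, P_2 of Fin k ⊕ Fin k. Let A = Fin k ⊕ Fin k ⊕ Fin k with three layers (top, middle, bottom), embed P_1 into the top-and-middle layers and P_2 into the middle-and-bottom layers, and let R be the finest equivalence relation on A containing both embedded relations (i.e., generated by: inl a ~ inl b and inl a ~ inr (inl b) etc. according to P_1 relating elements of the first two layers, and P_2 relating elements of the last two layers, with the primed vertices of P_1 identified with the unprimed vertices of P_2 in the middle layer). Let c(P_1, P_2) be the number of equivalence classes of R contained entirely in the middle layer, and let P_3 be the set partition of Fin k ⊕ Fin k obtained by restricting R to the top and bottom layers. Then T_{P_1} ∘ T_{P_2} = n^{c(P_1,P_2)} • T_{P_3} as endomorphisms of W_{k,n}. (The map Φ_{k,n} from the partition algebra Par_k(n) to End(W_{k,n}) is an algebra map.) -/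

import Mathlib

/-!
Formalization of statements from "Stable characters from permutation patterns"
by C. Gaetz and C. Ryba.
-/

open scoped Classical

noncomputable section

/-- A word `I` (with values in a linear order `M`) is `σ`-sorted:
`I a < I b` if and only if `σ a < σ b`. -/
def IsSorted {k : ℕ} {M : Type*} [LinearOrder M] (σ : Fin k → Fin k) (I : Fin k → M) : Prop :=
  ∀ a b : Fin k, I a < I b ↔ σ a < σ b

/-- `N_σ(g)`: the number of strictly increasing words `I : Fin k → Fin n` such that
`g ∘ I` is `σ`-sorted, i.e. the number of occurrences of the pattern `σ` in `g`. -/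
def patCount (k n : ℕ) (σ : Fin k → Fin k) (g : Equiv.Perm (Fin n)) : ℕ :=
  Nat.card {I : Fin k → Fin n // StrictMono I ∧ IsSorted σ (⇑g ∘ I)}

/-- `m_i(g)`: the number of cycles of length `i` in the cycle decomposition of `g`,
where fixed points count as cycles of length 1. -/
def cycleCount {n : ℕ} (g : Equiv.Perm (Fin n)) (i : ℕ) : ℕ :=
  if i = 1 then Nat.card {x : Fin n // g x = x} else Multiset.count i g.cycleType

/-- `W k n`: the space of `ℂ`-valued functions on words, a model of the `k`-th tensor power
of the permutation representation of `S_n`. -/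
abbrev W (k n : ℕ) := (Fin k → Fin n) → ℂ

/-- The labelling `ℓ_{J,I}` of `Fin k ⊕ Fin k` determined by the words `J` and `I`:
unprimed vertices (`inl`) get labels from `J`, primed vertices (`inr`) from `I`. -/
def label {k n : ℕ} (J I : Fin k → Fin n) : Fin k ⊕ Fin k → Fin n := Sum.elim J I

/-- `C_P(J, I)`: equal to `1` if the labelling `ℓ_{J,I}` is constant on every part of the
set partition `P` (i.e. every part is monochromatic), and `0` otherwise. -/
def CP {k n : ℕ} (P : Setoid (Fin k ⊕ Fin k)) (J I : Fin k → Fin n) : ℂ :=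
  if ∀ a b, P.r a b → label J I a = label J I b then 1 else 0

/-- `C'_P(J, I)`: equal to `1` if the labelling `ℓ_{J,I}` is constant on every part of `P`
and takes distinct values on distinct parts of `P`, and `0` otherwise. -/
def CP' {k n : ℕ} (P : Setoid (Fin k ⊕ Fin k)) (J I : Fin k → Fin n) : ℂ :=
  if (∀ a b, P.r a b → label J I a = label J I b) ∧
      (∀ a b, ¬ P.r a b → label J I a ≠ label J I b) then 1 else 0

/-- The operator `T_P : W_{k,n} → W_{k,n}`, `(T_P f)(J) = Σ_I C_P(J,I) f(I)`. -/
def TP (k n : ℕ) (P : Setoid (Fin k ⊕ Fin k)) : W k n →ₗ[ℂ] W k n :=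
  Matrix.mulVecLin (Matrix.of fun J I => CP P J I)

/-- The operator `T'_P : W_{k,n} → W_{k,n}`, `(T'_P f)(J) = Σ_I C'_P(J,I) f(I)`. -/
def TP' (k n : ℕ) (P : Setoid (Fin k ⊕ Fin k)) : W k n →ₗ[ℂ] W k n :=
  Matrix.mulVecLin (Matrix.of fun J I => CP' P J I)

/-- The action `ρ(g)` of `S_n` on `W k n`: `(ρ(g) f)(I) = f(g⁻¹ ∘ I)`. -/
def rho (k n : ℕ) (g : Equiv.Perm (Fin n)) : W k n →ₗ[ℂ] W k n where
  toFun f := fun I => f (⇑g⁻¹ ∘ I)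
  map_add' _ _ := rfl
  map_smul' _ _ := rfl

/-- The map `E_σ : ℂ → W_{k,n}` sending `1` to the sum of `v_I` over `σ`-sorted words `I`. -/
def Esig (k n : ℕ) (σ : Fin k → Fin k) : ℂ →ₗ[ℂ] W k n where
  toFun c := fun I => if IsSorted σ I then c else 0
  map_add' a b := by
    funext I; by_cases h : IsSorted σ I <;> simp [h]
  map_smul' a b := by
    funext I; by_cases h : IsSorted σ I <;> simp [h]

/-- The transpose map `E_σ^T : W_{k,n} → ℂ`, `f ↦ Σ_{I σ-sorted} f(I)`. -/
def EsigT (k n : ℕ) (σ : Fin k → Fin k) : W k n →ₗ[ℂ] ℂ where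
  toFun f := ∑ I ∈ Finset.univ.filter (fun I : Fin k → Fin n => IsSorted σ I), f I
  map_add' f g := Finset.sum_add_distrib
  map_smul' c f := by simp [Finset.mul_sum]

/-- There are finitely many set partitions (equivalence relations) on a finite type. -/
noncomputable instance {α : Type*} [Finite α] : Fintype (Setoid α) := by
  have : Finite (Setoid α) :=
    Finite.of_injective (fun s : Setoid α => s.r)
      (fun s t h => by cases s; cases t; cases h; rfl)
  exact Fintype.ofFinite _

/-- Embedding of a `(k,k)`-set partition into the top and middle layers of the
three-layer set `Fin k ⊕ (Fin k ⊕ Fin k)`: unprimed vertices go to the top layer,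
primed vertices to the middle layer. -/
def embedTopMid (k : ℕ) : Fin k ⊕ Fin k → Fin k ⊕ (Fin k ⊕ Fin k) :=
  Sum.elim (fun a => Sum.inl a) (fun a => Sum.inr (Sum.inl a))

/-- Embedding of a `(k,k)`-set partition into the middle and bottom layers:
unprimed vertices go to the middle layer, primed vertices to the bottom layer. -/
def embedMidBot (k : ℕ) : Fin k ⊕ Fin k → Fin k ⊕ (Fin k ⊕ Fin k) :=
  Sum.elim (fun a => Sum.inr (Sum.inl a)) (fun a => Sum.inr (Sum.inr a))

/-- Embedding of the top and bottom layers into the three-layer set. -/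
def embedTopBot (k : ℕ) : Fin k ⊕ Fin k → Fin k ⊕ (Fin k ⊕ Fin k) :=
  Sum.elim (fun a => Sum.inl a) (fun a => Sum.inr (Sum.inr a))

/-- The finest equivalence relation on the three-layer set `Fin k ⊕ (Fin k ⊕ Fin k)`
containing `P₁` embedded in the top-and-middle layers and `P₂` embedded in the
middle-and-bottom layers. -/
def glue (k : ℕ) (P₁ P₂ : Setoid (Fin k ⊕ Fin k)) : Setoid (Fin k ⊕ (Fin k ⊕ Fin k)) :=
  Relation.EqvGen.setoid (fun a b =>
    (∃ x y, P₁.r x y ∧ a = embedTopMid k x ∧ b = embedTopMid k y) ∨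
    (∃ x y, P₂.r x y ∧ a = embedMidBot k x ∧ b = embedMidBot k y))

/-- `c(P₁, P₂)`: the number of equivalence classes of the glued relation lying entirely in
the middle layer. -/
def midComponents (k : ℕ) (P₁ P₂ : Setoid (Fin k ⊕ Fin k)) : ℕ :=
  Nat.card {c : Quotient (glue k P₁ P₂) //
    ∀ a, Quotient.mk (glue k P₁ P₂) a = c → ∃ x : Fin k, a = Sum.inr (Sum.inl x)}

/-- `P₃ = P₁ ∘ P₂`: the set partition of `Fin k ⊕ Fin k` obtained by restricting the glued
relation to the top and bottom layers. -/
def partComp (k : ℕ) (P₁ P₂ : Setoid (Fin k ⊕ Fin k)) : Setoid (Fin k ⊕ Fin k) :=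
  Setoid.comap (embedTopBot k) (glue k P₁ P₂)

section AuxTPcomp

variable {k n : ℕ}

/-- Three-layer labelling. -/
def lab3 (J I L : Fin k → Fin n) : Fin k ⊕ (Fin k ⊕ Fin k) → Fin n :=
  Sum.elim J (Sum.elim I L)

lemma lab3_topMid (J I L : Fin k → Fin n) (x : Fin k ⊕ Fin k) :
    lab3 J I L (embedTopMid k x) = label J I x := by cases x <;> rfl

lemma lab3_midBot (J I L : Fin k → Fin n) (x : Fin k ⊕ Fin k) :
    lab3 J I L (embedMidBot k x) = label I L x := by cases x <;> rfl

lemma lab3_topBot (J I L : Fin k → Fin n) (x : Fin k ⊕ Fin k) :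
    lab3 J I L (embedTopBot k x) = label J L x := by cases x <;> rfl

/-- Validity of a middle word. -/
def Valid (P₁ P₂ : Setoid (Fin k ⊕ Fin k)) (J L I : Fin k → Fin n) : Prop :=
  ∀ a b, (glue k P₁ P₂).r a b → lab3 J I L a = lab3 J I L b

lemma valid_iff (P₁ P₂ : Setoid (Fin k ⊕ Fin k)) (J L I : Fin k → Fin n) :
    ((∀ a b, P₁.r a b → label J I a = label J I b) ∧
     (∀ a b, P₂.r a b → label I L a = label I L b)) ↔ Valid P₁ P₂ J L I := by
  constructor
  · rintro ⟨h₁, h₂⟩ a b h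
    have h' : Relation.EqvGen (fun a b =>
        (∃ x y, P₁.r x y ∧ a = embedTopMid k x ∧ b = embedTopMid k y) ∨
        (∃ x y, P₂.r x y ∧ a = embedMidBot k x ∧ b = embedMidBot k y)) a b := h
    clear h
    induction h' with
    | rel a b hab =>
      rcases hab with ⟨x, y, hxy, rfl, rfl⟩ | ⟨x, y, hxy, rfl, rfl⟩
      · rw [lab3_topMid, lab3_topMid]; exact h₁ x y hxy
      · rw [lab3_midBot, lab3_midBot]; exact h₂ x y hxy
    | refl => rfl
    | symm _ _ _ ih => exact ih.symm
    | trans _ _ _ _ _ ih1 ih2 => exact ih1.trans ih2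
  · intro h
    refine ⟨fun a b hab => ?_, fun a b hab => ?_⟩
    · rw [← lab3_topMid J I L, ← lab3_topMid J I L]
      exact h _ _ (Relation.EqvGen.rel _ _ (Or.inl ⟨a, b, hab, rfl, rfl⟩))
    · rw [← lab3_midBot J I L, ← lab3_midBot J I L]
      exact h _ _ (Relation.EqvGen.rel _ _ (Or.inr ⟨a, b, hab, rfl, rfl⟩))


/-- Functions on the glued quotient with prescribed top/bottom boundary values. -/
def Bdy (P₁ P₂ : Setoid (Fin k ⊕ Fin k)) (J L : Fin k → Fin n) : Type _ :=
  {φ : Quotient (glue k P₁ P₂) → Fin n //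
    ∀ a, φ (Quotient.mk (glue k P₁ P₂) (embedTopBot k a)) = label J L a}

/-- The equivalence classes contained in the middle layer. -/
def Mid (k : ℕ) (P₁ P₂ : Setoid (Fin k ⊕ Fin k)) : Type _ :=
  {c : Quotient (glue k P₁ P₂) //
    ∀ a, Quotient.mk (glue k P₁ P₂) a = c → ∃ x : Fin k, a = Sum.inr (Sum.inl x)}

instance (k : ℕ) (P₁ P₂ : Setoid (Fin k ⊕ Fin k)) : Finite (Mid k P₁ P₂) := by
  unfold Mid; exact Subtype.finite

lemma bdy_eq (P₁ P₂ : Setoid (Fin k ⊕ Fin k)) (J L : Fin k → Fin n) (φ : Bdy P₁ P₂ J L) :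
    lab3 J (fun a => φ.1 (Quotient.mk (glue k P₁ P₂) (Sum.inr (Sum.inl a)))) L
      = fun a => φ.1 (Quotient.mk (glue k P₁ P₂) a) := by
  funext a
  rcases a with x | (x | x)
  · exact (φ.2 (Sum.inl x)).symm
  · rfl
  · exact (φ.2 (Sum.inr x)).symm

/-- Valid middle words correspond to boundary-compatible functions on the quotient. -/
def e1 (P₁ P₂ : Setoid (Fin k ⊕ Fin k)) (J L : Fin k → Fin n) :
    {I : Fin k → Fin n // Valid P₁ P₂ J L I} ≃ Bdy P₁ P₂ J L where
  toFun I := ⟨Quotient.lift (lab3 J I.1 L) I.2, fun a => by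
    exact lab3_topBot _ _ _ _⟩
  invFun φ := ⟨fun a => φ.1 (Quotient.mk (glue k P₁ P₂) (Sum.inr (Sum.inl a))), by
    intro a b h
    have hb := congrFun (bdy_eq P₁ P₂ J L φ)
    rw [hb a, hb b]
    exact congrArg φ.1 (Quotient.sound h)⟩
  left_inv I := rfl
  right_inv φ := Subtype.ext (funext fun c => by
    induction c using Quotient.ind with
    | _ a => exact congrFun (bdy_eq P₁ P₂ J L φ) a)

lemma not_mid_exists (P₁ P₂ : Setoid (Fin k ⊕ Fin k)) (c : Quotient (glue k P₁ P₂))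
    (h : ¬ ∀ a, Quotient.mk (glue k P₁ P₂) a = c → ∃ x : Fin k, a = Sum.inr (Sum.inl x)) :
    ∃ y : Fin k ⊕ Fin k, Quotient.mk (glue k P₁ P₂) (embedTopBot k y) = c := by
  push_neg at h
  obtain ⟨a, ha, hne⟩ := h
  rcases a with x | (x | x)
  · exact ⟨Sum.inl x, ha⟩
  · exact absurd rfl (hne x)
  · exact ⟨Sum.inr x, ha⟩

/-- Boundary-compatible functions correspond to free choices on middle classes. -/
def e2 (P₁ P₂ : Setoid (Fin k ⊕ Fin k)) (J L : Fin k → Fin n)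
    (hJL : ∀ a b, (partComp k P₁ P₂).r a b → label J L a = label J L b) :
    Bdy P₁ P₂ J L ≃ (Mid k P₁ P₂ → Fin n) where
  toFun φ := fun c => φ.1 c.1
  invFun f := ⟨fun c =>
    if h : ∀ a, Quotient.mk (glue k P₁ P₂) a = c → ∃ x : Fin k, a = Sum.inr (Sum.inl x)
    then f ⟨c, h⟩
    else label J L (Classical.choose (not_mid_exists P₁ P₂ c h)), by
    intro a
    have hnm : ¬ ∀ b, Quotient.mk (glue k P₁ P₂) b = Quotient.mk (glue k P₁ P₂) (embedTopBot k a)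
        → ∃ x : Fin k, b = Sum.inr (Sum.inl x) := by
      intro h
      obtain ⟨x, hx⟩ := h (embedTopBot k a) rfl
      cases a <;> simp [embedTopBot] at hx
    beta_reduce
    rw [dif_neg hnm]
    have hspec := Classical.choose_spec (not_mid_exists P₁ P₂ _ hnm)
    exact hJL _ _ (Quotient.exact (s := glue k P₁ P₂) hspec)⟩
  left_inv φ := Subtype.ext (funext fun c => by
    by_cases h : ∀ a, Quotient.mk (glue k P₁ P₂) a = c → ∃ x : Fin k, a = Sum.inr (Sum.inl x)
    · exact dif_pos h
    · have hspec := Classical.choose_spec (not_mid_exists P₁ P₂ c h)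
      refine (dif_neg h).trans ?_
      rw [← φ.2 (Classical.choose (not_mid_exists P₁ P₂ c h))]
      exact congrArg φ.1 hspec)
  right_inv f := funext fun c => dif_pos c.2

lemma key (P₁ P₂ : Setoid (Fin k ⊕ Fin k)) (J L : Fin k → Fin n) :
    (∑ I : Fin k → Fin n, CP P₁ J I * CP P₂ I L)
      = (n : ℂ) ^ midComponents k P₁ P₂ * CP (partComp k P₁ P₂) J L := by
  have hsum : (∑ I : Fin k → Fin n, CP P₁ J I * CP P₂ I L)
      = ((Finset.univ.filter fun I : Fin k → Fin n => Valid P₁ P₂ J L I).card : ℂ) := by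
    rw [← Finset.sum_boole]
    refine Finset.sum_congr rfl fun I _ => ?_
    have hv := valid_iff P₁ P₂ J L I
    rw [CP, CP]
    by_cases h3 : Valid P₁ P₂ J L I
    · rw [if_pos h3, if_pos (hv.mpr h3).1, if_pos (hv.mpr h3).2, one_mul]
    · rw [if_neg h3]
      by_cases h1 : ∀ a b, P₁.r a b → label J I a = label J I b
      · rw [if_pos h1, one_mul, if_neg fun h2 => h3 (hv.mp ⟨h1, h2⟩)]
      · rw [if_neg h1, zero_mul]
  have hcard : (Finset.univ.filter fun I : Fin k → Fin n => Valid P₁ P₂ J L I).card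
      = Nat.card {I : Fin k → Fin n // Valid P₁ P₂ J L I} := by
    rw [Nat.card_eq_fintype_card, Fintype.card_subtype]
  rw [hsum, hcard]
  by_cases hJL : ∀ a b, (partComp k P₁ P₂).r a b → label J L a = label J L b
  · rw [CP, if_pos hJL, mul_one,
      Nat.card_congr ((e1 P₁ P₂ J L).trans (e2 P₁ P₂ J L hJL)), Nat.card_fun,
      Nat.card_eq_fintype_card (α := Fin n), Fintype.card_fin]
    have : Nat.card (Mid k P₁ P₂) = midComponents k P₁ P₂ := rfl
    rw [this, Nat.cast_pow]
  · rw [CP, if_neg hJL, mul_zero]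
    have he : IsEmpty {I : Fin k → Fin n // Valid P₁ P₂ J L I} :=
      ⟨fun I => hJL fun a b hab => by
        rw [← lab3_topBot J I.1 L, ← lab3_topBot J I.1 L]
        exact I.2 _ _ hab⟩
    rw [@Nat.card_of_isEmpty _ he, Nat.cast_zero]

end AuxTPcomp

/-- `T_{P₁} ∘ T_{P₂} = n^{c(P₁,P₂)} • T_{P₃}` (`Φ_{k,n}` is an algebra
map). -/
theorem TP_comp (k n : ℕ) (hk : 0 < k) (hn : 0 < n) (P₁ P₂ : Setoid (Fin k ⊕ Fin k)) :
    (TP k n P₁) ∘ₗ (TP k n P₂) =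
      (n : ℂ) ^ (midComponents k P₁ P₂) • TP k n (partComp k P₁ P₂) := by
  have hM : (Matrix.of fun J I : Fin k → Fin n => CP P₁ J I)
        * (Matrix.of fun I L : Fin k → Fin n => CP P₂ I L)
      = ((n : ℂ) ^ midComponents k P₁ P₂)
        • Matrix.of (fun J L : Fin k → Fin n => CP (partComp k P₁ P₂) J L) := by
    ext J L
    rw [Matrix.mul_apply, Matrix.smul_apply, Matrix.of_apply, smul_eq_mul]
    simpa only [Matrix.of_apply] using key P₁ P₂ J L
  rw [TP, TP, TP, ← Matrix.mulVecLin_mul, hM]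
  refine LinearMap.ext fun f => ?_
  rw [Matrix.mulVecLin_apply, Matrix.smul_mulVec, LinearMap.smul_apply,
    Matrix.mulVecLin_apply]
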